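/- Let x, y, x_E, y_E, H, Q ∈ ℝ with Q ≥ 0, let t ∈ ℝ, and suppose there exists ξ ≥ 0 such that the real symmetric 3×3 matrix Φ with rows (ξ+1, 0, x_E−x), (0, ξ+1, y_E−y), (x_E−x, y_E−y, −Q²ξ + c), where c = (x−x_E)² + (y−y_E)² + H² − t, is positive semidefinite. Then for all (Δx, Δy) ∈ ℝ² with Δx² + Δy² ≤ Q², one has (x − x_E − Δx)² + (y − y_E − Δy)² + H² ≥ t. -/

import Mathlib

open Matrix

/-- Sufficiency of the S-procedure LMI: if `Φ(x, y, t, ξ)` is positive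
semidefinite for some multiplier `ξ ≥ 0`, then the worst-case squared distance
constraint holds over the whole uncertainty disk of radius `Q`. -/
theorem stmt_10 (x y xE yE H Q t : ℝ) (hQ : 0 ≤ Q) (ξ : ℝ) (hξ : 0 ≤ ξ)
    (hΦ : Matrix.PosSemidef
      (!![ξ + 1, 0, xE - x;
          0, ξ + 1, yE - y;
          xE - x, yE - y,
            -Q ^ 2 * ξ + ((x - xE) ^ 2 + (y - yE) ^ 2 + H ^ 2 - t)] :
        Matrix (Fin 3) (Fin 3) ℝ)) :
    ∀ Δx Δy : ℝ, Δx ^ 2 + Δy ^ 2 ≤ Q ^ 2 →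
      t ≤ (x - xE - Δx) ^ 2 + (y - yE - Δy) ^ 2 + H ^ 2 := by
  intro Δx Δy hD
  have h := hΦ.dotProduct_mulVec_nonneg ![Δx, Δy, 1]
  simp [dotProduct, Matrix.mulVec, Fin.sum_univ_succ] at h
  nlinarith [mul_nonneg hξ (sub_nonneg.mpr hD), h]
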